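/- Let b ≥ 3 be an integer and let k : ℤ → ℤ be b-expanding with k(1) > b + 1. Then the set IP(k) ⊆ ℤ has upper Banach density zero: #(I ∩ IP(k))/#I → 0 as #I → ∞, over finite intervals I ⊆ ℤ. -/

import Mathlib

/-- `k : ℤ → ℤ` is `b`-expanding: `k(−n) = −k(n)` and `k(n+1) > b·Σ_{i=0}^{n} k(i)` for all
`n ≥ 0`. -/
def IsExpanding (b : ℕ) (k : ℤ → ℤ) : Prop :=
  (∀ n : ℤ, k (-n) = - k n) ∧
  ∀ n : ℕ, (b : ℤ) * ∑ i ∈ Finset.range (n + 1), k (i : ℤ) < k ((n : ℤ) + 1)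

/-- `IP(k)`: the set of sums of finite subsets of the image set `k(ℤ)`. -/
def IPk (k : ℤ → ℤ) : Set ℤ :=
  {t | ∃ F : Finset ℤ, ↑F ⊆ Set.range k ∧ t = ∑ x ∈ F, x}

namespace Stmt13Aux

/-- partial sums -/
def S (k : ℤ → ℤ) (n : ℕ) : ℤ := ∑ i ∈ Finset.range (n + 1), k (i : ℤ)

variable {b : ℕ} {k : ℤ → ℤ}

lemma k_zero (hodd : ∀ n : ℤ, k (-n) = -k n) : k 0 = 0 := by
  have h := hodd 0
  simp at h
  linarith

lemma nonneg_aux (hb : 3 ≤ b) (hk : IsExpanding b k) :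
    ∀ n : ℕ, 0 ≤ S k n ∧ 0 ≤ k (n : ℤ) := by
  intro n
  induction n with
  | zero =>
    constructor <;> simp [S, k_zero hk.1]
  | succ n ih =>
    have h2 : (b : ℤ) * S k n < k ((n : ℤ) + 1) := hk.2 n
    have hb' : (3 : ℤ) ≤ b := by exact_mod_cast hb
    have hkpos : 0 ≤ k ((n : ℤ) + 1) := by nlinarith [ih.1]
    have hScast : S k (n + 1) = S k n + k ((n : ℤ) + 1) := by
      simp only [S, Finset.sum_range_succ]
      push_cast
      ring
    constructor
    · rw [hScast]; linarith [ih.1]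
    · push_cast
      exact hkpos

lemma k_nonneg (hb : 3 ≤ b) (hk : IsExpanding b k) (n : ℕ) : 0 ≤ k (n : ℤ) :=
  (nonneg_aux hb hk n).2

lemma S_nonneg (hb : 3 ≤ b) (hk : IsExpanding b k) (n : ℕ) : 0 ≤ S k n :=
  (nonneg_aux hb hk n).1

lemma k_le_S (hb : 3 ≤ b) (hk : IsExpanding b k) (n : ℕ) : k (n : ℤ) ≤ S k n := by
  have : ∀ i ∈ Finset.range (n + 1), 0 ≤ k (i : ℤ) := fun i _ => k_nonneg hb hk i
  exact Finset.single_le_sum this (Finset.self_mem_range_succ n)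

lemma k_monoN (hb : 3 ≤ b) (hk : IsExpanding b k) : StrictMono (fun n : ℕ => k (n : ℤ)) := by
  apply strictMono_nat_of_lt_succ
  intro n
  have h2 : (b : ℤ) * S k n < k ((n : ℤ) + 1) := hk.2 n
  have hb' : (3 : ℤ) ≤ b := by exact_mod_cast hb
  have h3 := k_le_S hb hk n
  have h4 := S_nonneg hb hk n
  have : k ((n : ℤ)) ≤ (b : ℤ) * S k n := by nlinarith
  have : k ((n : ℤ)) < k ((n : ℤ) + 1) := by linarith
  exact_mod_cast this

lemma k_pos (hb : 3 ≤ b) (hk : IsExpanding b k) (n : ℕ) (hn : 1 ≤ n) : 0 < k (n : ℤ) := by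
  have := k_monoN hb hk (show 0 < n from hn)
  simpa [k_zero hk.1] using this

lemma k_monoZ (hb : 3 ≤ b) (hk : IsExpanding b k) : StrictMono k := by
  have hN : ∀ m n : ℕ, m < n → k (m : ℤ) < k (n : ℤ) := fun m n h => k_monoN hb hk h
  have hnn : ∀ u v : ℤ, 0 ≤ u → u < v → k u < k v := by
    intro u v hu huv
    lift u to ℕ using hu
    lift v to ℕ using (by linarith)
    exact hN _ _ (by exact_mod_cast huv)
  intro u v huv
  rcases le_or_gt 0 u with hu | hu
  · exact hnn u v hu huv
  · rcases le_or_gt 0 v with hv | hv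
    · -- u < 0 ≤ v
      have h1 : 0 < k (-u) := by
        have : (0:ℤ) ≤ 1 := by norm_num
        have h0 : k 0 < k (-u) := hnn 0 (-u) le_rfl (by linarith)
        rw [k_zero hk.1] at h0
        exact h0
      have h2 : 0 ≤ k v := by
        rcases eq_or_lt_of_le hv with h | h
        · rw [← h, k_zero hk.1]
        · have h0 : k 0 < k v := hnn 0 v le_rfl h
          rw [k_zero hk.1] at h0
          linarith
      have e1 := hk.1 (-u)
      rw [neg_neg] at e1
      linarith
    · -- u < v < 0
      have h3 : k (-v) < k (-u) := hnn (-v) (-u) (by linarith) (by linarith)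
      have e1 := hk.1 (-u)
      have e2 := hk.1 (-v)
      rw [neg_neg] at e1 e2
      linarith

lemma S_ge (hb : 3 ≤ b) (hk : IsExpanding b k) (hk1 : (b : ℤ) + 1 < k 1) :
    ∀ n : ℕ, 1 ≤ n → (4 : ℤ) ^ n ≤ S k n := by
  intro n hn
  induction n, hn using Nat.le_induction with
  | base =>
    have : S k 1 = k 0 + k 1 := by
      simp [S, Finset.sum_range_succ]
    have hb' : (3 : ℤ) ≤ b := by exact_mod_cast hb
    rw [this, k_zero hk.1]
    norm_num
    linarith
  | succ n hn ih =>
    have h2 : (b : ℤ) * S k n < k ((n : ℤ) + 1) := hk.2 n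
    have hb' : (3 : ℤ) ≤ b := by exact_mod_cast hb
    have hScast : S k (n + 1) = S k n + k ((n : ℤ) + 1) := by
      simp only [S, Finset.sum_range_succ]
      push_cast
      ring
    have h4 : (0:ℤ) < 4 ^ n := by positivity
    rw [hScast]
    have : (4:ℤ) ^ (n+1) = 4 * 4 ^ n := by ring
    nlinarith [S_nonneg hb hk n]

lemma k_lb (hb : 3 ≤ b) (hk : IsExpanding b k) (hk1 : (b : ℤ) + 1 < k 1) :
    ∀ j : ℕ, 3 * 4 ^ j < k ((j : ℤ) + 1) := by
  intro j
  cases j with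
  | zero =>
    have hb' : (3 : ℤ) ≤ b := by exact_mod_cast hb
    simpa using (by linarith : (3:ℤ) < k 1)
  | succ j =>
    have h2 : (b : ℤ) * S k (j + 1) < k (((j:ℕ) + 1 : ℤ) + 1) := by
      have := hk.2 (j + 1)
      push_cast at this ⊢
      convert this using 2
      rfl
    have hb' : (3 : ℤ) ≤ b := by exact_mod_cast hb
    have h3 := S_ge hb hk hk1 (j + 1) (by omega)
    have h4 : (0:ℤ) < 4 ^ (j+1) := by positivity
    have h5 : (3:ℤ) * 4 ^ (j+1) ≤ (b:ℤ) * S k (j+1) := by nlinarith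
    push_cast at h2 ⊢
    linarith

lemma pair_sum (hodd : ∀ n : ℤ, k (-n) = -k n) (d : ℤ → ℤ) :
    ∀ M : ℕ, ∑ j ∈ Finset.Icc (-(M : ℤ)) (M : ℤ), d j * k j
      = ∑ i ∈ Finset.range M, (d ((i : ℤ) + 1) - d (-((i : ℤ) + 1))) * k ((i : ℤ) + 1) := by
  intro M
  induction M with
  | zero => simp [k_zero hodd]
  | succ M ih =>
    have hins : Finset.Icc (-((M : ℤ) + 1)) ((M : ℤ) + 1)
        = insert (-((M : ℤ) + 1)) (insert ((M : ℤ) + 1) (Finset.Icc (-(M : ℤ)) (M : ℤ))) := by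
      ext x
      simp only [Finset.mem_Icc, Finset.mem_insert]
      omega
    have hc : ((M + 1 : ℕ) : ℤ) = (M : ℤ) + 1 := by push_cast; ring
    rw [hc, hins]
    rw [Finset.sum_insert (by simp only [Finset.mem_insert, Finset.mem_Icc]; omega)]
    rw [Finset.sum_insert (by simp only [Finset.mem_Icc]; omega)]
    rw [Finset.sum_range_succ, ih, hodd ((M : ℤ) + 1)]
    ring

lemma sum_bound (hb : 3 ≤ b) (hk : IsExpanding b k) (M : ℕ) (c : ℕ → ℤ)
    (hc : ∀ i, |c i| ≤ 2) :
    |∑ i ∈ Finset.range M, c i * k ((i : ℤ) + 1)| ≤ 2 * S k M := by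
  have hS : S k M = ∑ i ∈ Finset.range M, k ((i : ℤ) + 1) := by
    rw [S, Finset.sum_range_succ']
    rw [show k ((0:ℕ) : ℤ) = 0 from by simpa using k_zero hk.1, add_zero]
    refine Finset.sum_congr rfl fun i _ => ?_
    push_cast
    ring_nf
  calc |∑ i ∈ Finset.range M, c i * k ((i : ℤ) + 1)|
      ≤ ∑ i ∈ Finset.range M, |c i * k ((i : ℤ) + 1)| := Finset.abs_sum_le_sum_abs _ _
    _ ≤ ∑ i ∈ Finset.range M, 2 * k ((i : ℤ) + 1) := by
        refine Finset.sum_le_sum fun i _ => ?_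
        rw [abs_mul]
        have h1 : 0 ≤ k ((i : ℤ) + 1) := by
          have := k_nonneg hb hk (i + 1)
          push_cast at this
          exact this
        rw [abs_of_nonneg h1]
        exact mul_le_mul_of_nonneg_right (hc i) h1
    _ = 2 * S k M := by rw [hS, Finset.mul_sum]

lemma sep (hb : 3 ≤ b) (hk : IsExpanding b k) :
    ∀ (M : ℕ) (c : ℕ → ℤ), (∀ i, |c i| ≤ 2) → ∀ m : ℕ, 1 ≤ m →
      3 * |∑ i ∈ Finset.range M, c i * k ((i : ℤ) + 1)| < k (m : ℤ) →
      ∀ i < M, m ≤ i + 1 → c i = 0 := by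
  intro M
  induction M with
  | zero => intro c _ m _ _ i hi _; omega
  | succ M ih =>
    intro c hc m hm hlt i hi him
    have hmM : m ≤ M + 1 := by omega
    have hcM : c M = 0 := by
      by_contra hne
      have h1 : 1 ≤ |c M| := by
        rcases (abs_le.mp (hc M)) with ⟨h, h'⟩
        rcases lt_trichotomy (c M) 0 with h0 | h0 | h0
        · rw [abs_of_neg h0]; omega
        · exact absurd h0 hne
        · rw [abs_of_pos h0]; omega
      have hA := sum_bound hb hk M c hc
      have hSn := S_nonneg hb hk M
      have hSk : (b : ℤ) * S k M < k ((M : ℤ) + 1) := hk.2 M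
      have hb' : (3 : ℤ) ≤ b := by exact_mod_cast hb
      have hkMp : 0 ≤ k ((M : ℤ) + 1) := by
        have := k_nonneg hb hk (M + 1); push_cast at this; exact this
      have hB : k ((M : ℤ) + 1) ≤ |c M * k ((M : ℤ) + 1)| := by
        rw [abs_mul, abs_of_nonneg hkMp]
        nlinarith
      set A := ∑ i ∈ Finset.range M, c i * k ((i : ℤ) + 1) with hAdef
      have hsum : ∑ i ∈ Finset.range (M + 1), c i * k ((i : ℤ) + 1)
          = A + c M * k ((M : ℤ) + 1) := by
        rw [Finset.sum_range_succ]
      have htri : |c M * k ((M : ℤ) + 1)| ≤ |A + c M * k ((M : ℤ) + 1)| + |A| := by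
        have := abs_add_le (A + c M * k ((M : ℤ) + 1)) (-A)
        simpa using this
      have hmono : k (m : ℤ) ≤ k ((M : ℤ) + 1) := by
        rcases eq_or_lt_of_le hmM with h | h
        · have : (m : ℤ) = (M : ℤ) + 1 := by exact_mod_cast congrArg Nat.cast h
          rw [this]
        · have := k_monoZ hb hk (show (m : ℤ) < (M : ℤ) + 1 by exact_mod_cast h)
          linarith
      rw [hsum] at hlt
      have h6S : 6 * S k M ≤ 2 * (b : ℤ) * S k M := by nlinarith
      linarith
    rcases Nat.lt_succ_iff_lt_or_eq.mp hi with hiM | rfl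
    · refine ih c hc m hm ?_ i hiM him
      rwa [Finset.sum_range_succ, hcM, zero_mul, add_zero] at hlt
    · exact hcM

lemma rep (hb : 3 ≤ b) (hk : IsExpanding b k) {t : ℤ} (ht : t ∈ IPk k) :
    ∃ (e : ℕ → ℤ) (M : ℕ), (∀ i, e i = 0 ∨ e i = 1 ∨ e i = -1) ∧
      ∀ M' : ℕ, M ≤ M' → t = ∑ i ∈ Finset.range M', e i * k ((i : ℤ) + 1) := by
  classical
  obtain ⟨F, hF, rfl⟩ := ht
  have hinj : Function.Injective k := (k_monoZ hb hk).injective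
  set G := F.preimage k hinj.injOn with hGdef
  have hsum : ∑ j ∈ G, k j = ∑ x ∈ F, x := by
    refine Finset.sum_preimage k F hinj.injOn (fun x => x) fun x hx hr => absurd (hF hx) hr
  set d : ℤ → ℤ := fun j => if j ∈ G then 1 else 0 with hddef
  refine ⟨fun i => d ((i : ℤ) + 1) - d (-((i : ℤ) + 1)), G.sup Int.natAbs, ?_, ?_⟩
  · intro i
    simp only [hddef]
    split_ifs <;> norm_num
  · intro M' hM'
    have hGsub : G ⊆ Finset.Icc (-(M' : ℤ)) (M' : ℤ) := by
      intro j hj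
      have h1 : j.natAbs ≤ G.sup Int.natAbs := Finset.le_sup hj
      simp only [Finset.mem_Icc]
      omega
    have h2 : ∑ x ∈ F, x = ∑ j ∈ Finset.Icc (-(M' : ℤ)) (M' : ℤ), d j * k j := by
      rw [← hsum]
      have e1 : ∑ j ∈ G, k j = ∑ j ∈ G, d j * k j :=
        Finset.sum_congr rfl fun j hj => by simp [hddef, hj]
      rw [e1]
      exact Finset.sum_subset hGsub fun x _ hx => by simp [hddef, hx]
    rw [h2, pair_sum hk.1 d M']

lemma count (hb : 3 ≤ b) (hk : IsExpanding b k) (a : ℤ) (n m : ℕ) (hm : 1 ≤ m)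
    (hmn : 3 * (n : ℤ) ≤ k (m : ℤ)) :
    (Set.Ico a (a + n) ∩ IPk k).ncard ≤ 3 ^ (m - 1) := by
  classical
  set s := Set.Ico a (a + (n : ℤ)) ∩ IPk k with hsdef
  have hrep : ∀ t ∈ s, ∃ (e : ℕ → ℤ) (M : ℕ), (∀ i, e i = 0 ∨ e i = 1 ∨ e i = -1) ∧
      ∀ M' : ℕ, M ≤ M' → t = ∑ i ∈ Finset.range M', e i * k ((i : ℤ) + 1) :=
    fun t ht => rep hb hk ht.2
  choose! e M he hte using hrep
  set f : ℤ → (Fin (m - 1) → Fin 3) := fun t i =>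
    if e t i.val = 1 then 1 else if e t i.val = -1 then 2 else 0 with hfdef
  have hinj : Set.InjOn f s := by
    intro t ht t' ht' hft
    set Mx := max (M t) (M t') with hMx
    have h1 : t = ∑ i ∈ Finset.range Mx, e t i * k ((i : ℤ) + 1) :=
      hte t ht Mx (le_max_left _ _)
    have h2 : t' = ∑ i ∈ Finset.range Mx, e t' i * k ((i : ℤ) + 1) :=
      hte t' ht' Mx (le_max_right _ _)
    set c : ℕ → ℤ := fun i => e t i - e t' i with hcdef
    have hc : ∀ i, |c i| ≤ 2 := by
      intro i
      rcases he t ht i with h | h | h <;> rcases he t' ht' i with h' | h' | h' <;>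
        simp [hcdef, h, h'] <;> norm_num
    have hdiff : t - t' = ∑ i ∈ Finset.range Mx, c i * k ((i : ℤ) + 1) := by
      rw [h1, h2, ← Finset.sum_sub_distrib]
      exact Finset.sum_congr rfl fun i _ => (sub_mul _ _ _).symm
    have hn1 : 1 ≤ n := by
      by_contra h
      have : n = 0 := by omega
      rcases ht.1 with ⟨hta, htb⟩
      rw [this] at htb
      simp at htb
      omega
    have habs : 3 * |∑ i ∈ Finset.range Mx, c i * k ((i : ℤ) + 1)| < k (m : ℤ) := by
      rw [← hdiff]
      rcases ht.1 with ⟨hta, htb⟩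
      rcases ht'.1 with ⟨hta', htb'⟩
      have hle : |t - t'| ≤ (n : ℤ) - 1 := by
        rw [abs_le]; omega
      have : (1:ℤ) ≤ n := by exact_mod_cast hn1
      linarith
    have hzero : ∀ i < Mx, m ≤ i + 1 → c i = 0 := sep hb hk Mx c hc m hm habs
    have hzall : ∀ i < Mx, c i = 0 := by
      intro i hi
      rcases le_or_gt m (i + 1) with hcase | hcase
      · exact hzero i hi hcase
      · have hilt : i < m - 1 := by omega
        have hval := congrFun hft ⟨i, hilt⟩
        simp only [hfdef] at hval
        rcases he t ht i with h | h | h <;> rcases he t' ht' i with h' | h' | h' <;>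
          simp [h, h'] at hval ⊢ <;> simp [hcdef, h, h'] <;> omega
    have : t - t' = 0 := by
      rw [hdiff]
      exact Finset.sum_eq_zero fun i hi => by
        rw [hzall i (Finset.mem_range.mp hi), zero_mul]
    linarith
  have hcard : s.ncard ≤ (Set.univ : Set (Fin (m - 1) → Fin 3)).ncard :=
    Set.ncard_le_ncard_of_injOn f (fun x _ => Set.mem_univ _) hinj Set.finite_univ
  rw [Set.ncard_univ] at hcard
  simpa [Nat.card_eq_fintype_card] using hcard

end Stmt13Aux

theorem stmt13 (b : ℕ) (hb : 3 ≤ b) (k : ℤ → ℤ) (hk : IsExpanding b k)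
    (hk1 : (b : ℤ) + 1 < k 1) :
    ∀ ε : ℝ, 0 < ε → ∃ N : ℕ, ∀ (a : ℤ) (n : ℕ), N ≤ n →
      ((Set.Ico a (a + n) ∩ IPk k).ncard : ℝ) < ε * n := by
  classical
  intro ε hε
  obtain ⟨m1, hm1⟩ := exists_pow_lt_of_lt_one (show (0:ℝ) < ε / 3 by positivity)
    (by norm_num : (3 / 4 : ℝ) < 1)
  refine ⟨(k ((m1 + 3 : ℕ) : ℤ)).toNat + 1, ?_⟩
  intro a n hn
  have hn1 : 1 ≤ n := by omega
  have hex : ∃ m : ℕ, 3 * (n : ℤ) ≤ k (m : ℤ) := by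
    refine ⟨n + 1, ?_⟩
    have h1 := Stmt13Aux.k_lb hb hk hk1 n
    have h2 : (n : ℤ) ≤ 4 ^ n := by
      calc (n : ℤ) ≤ 2 ^ n := by exact_mod_cast (Nat.lt_two_pow_self (n := n)).le
        _ ≤ 4 ^ n := pow_le_pow_left₀ (by norm_num) (by norm_num) n
    push_cast
    linarith
  set m := Nat.find hex with hmdef
  have hpm : 3 * (n : ℤ) ≤ k (m : ℤ) := Nat.find_spec hex
  have hNk : (((k ((m1 + 3 : ℕ) : ℤ)).toNat : ℤ)) = k ((m1 + 3 : ℕ) : ℤ) :=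
    Int.toNat_of_nonneg (Stmt13Aux.k_nonneg hb hk _)
  have hnN : ((k ((m1 + 3 : ℕ) : ℤ)).toNat : ℤ) + 1 ≤ (n : ℤ) := by exact_mod_cast hn
  have hlow : m1 + 3 < m := by
    rw [hmdef, Nat.lt_find_iff]
    intro j hj hpj
    have hmono : k (j : ℤ) ≤ k ((m1 + 3 : ℕ) : ℤ) :=
      (Stmt13Aux.k_monoZ hb hk).monotone (by exact_mod_cast hj)
    have hn0 : (0 : ℤ) ≤ n := by positivity
    linarith
  obtain ⟨j, hj⟩ : ∃ j, m = j + 2 := ⟨m - 2, by omega⟩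
  have hmin : ¬ (3 * (n : ℤ) ≤ k (((j + 1 : ℕ)) : ℤ)) :=
    Nat.find_min hex (by omega)
  have h4j : 3 * 4 ^ j < k ((j : ℤ) + 1) := Stmt13Aux.k_lb hb hk hk1 j
  have h4n : (4 : ℤ) ^ j < n := by
    push_cast at hmin
    linarith [not_le.mp hmin]
  have hcount := Stmt13Aux.count hb hk a n m (by omega) hpm
  have hm1j : m - 1 = j + 1 := by omega
  rw [hm1j] at hcount
  have hj_ge : m1 ≤ j := by omega
  have hr2 : ((3 : ℝ) / 4) ^ j < ε / 3 :=
    lt_of_le_of_lt (pow_le_pow_of_le_one (by norm_num) (by norm_num) hj_ge) hm1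
  have h4pos : (0 : ℝ) < 4 ^ j := by positivity
  have hnr : (4 : ℝ) ^ j < n := by exact_mod_cast h4n
  have h3j : (3 : ℝ) ^ (j + 1) = 3 * ((3 / 4) ^ j * 4 ^ j) := by
    rw [div_pow]
    field_simp
    ring
  calc ((Set.Ico a (a + (n:ℤ)) ∩ IPk k).ncard : ℝ) ≤ (3 : ℝ) ^ (j + 1) := by
        exact_mod_cast hcount
    _ < ε * n := by
        rw [h3j]
        have hs1 : ((3:ℝ) / 4) ^ j * 4 ^ j < (ε / 3) * 4 ^ j :=
          mul_lt_mul_of_pos_right hr2 h4pos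
        have hs2 : (ε / 3) * 4 ^ j < (ε / 3) * n :=
          mul_lt_mul_of_pos_left hnr (by positivity)
        nlinarith
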